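/- arXiv:1501.00426 — 4 statements merged into one kernel-verified Lean document; each statement's English description precedes it below -/
import Mathlib

section
/- If a meromorphic-type fraction has two representations h(ℓ_1,...,ℓ_m)/(L_1^{s_1} ⋯ L_n^{s_n}) = g(ℓ'_1,...,ℓ'_j)/((L'_1)^{t_1} ⋯ (L'_p)^{t_p}) where h, g are holomorphic germs at zero nonvanishing at zero, the families {ℓ_1,...,ℓ_m,L_1,...,L_n} and {ℓ'_1,...,ℓ'_j,L'_1,...,L'_p} are each linearly independent, and no L_i is proportional to another L_k (similarly for L'), then n = p, and after reordering, each L_i is a nonzero scalar multiple of L'_i with s_i = t_i. -/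
open Complex Filter Finset
open Metric Set Topology

section Helpers

variable {E : Type*} [NormedAddCommGroup E] [NormedSpace ℂ E] [FiniteDimensional ℂ E]

lemma aux_dense_ne {ι : Type*} [Finite ι] (f : ι → E →ₗ[ℂ] ℂ) (hf : ∀ i, f i ≠ 0) :
    Dense {x : E | ∀ i, f i x ≠ 0} := by
  have heq : {x : E | ∀ i, f i x ≠ 0} = ⋂ i, {x : E | f i x ≠ 0} := by
    ext x; simp [Set.mem_iInter]
  have : Countable ι := Finite.to_countable
  rw [heq]
  refine dense_iInter_of_isOpen (fun i => ?_) (fun i => ?_)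
  · exact isOpen_compl_iff.mpr
      (isClosed_singleton.preimage (f i).continuous_of_finiteDimensional)
  · have hker : {x : E | f i x ≠ 0} = ((LinearMap.ker (f i) : Set E))ᶜ := by
      ext x; simp [LinearMap.mem_ker]
    rw [hker, ← interior_eq_empty_iff_dense_compl]
    by_contra hne
    have : LinearMap.ker (f i) = ⊤ :=
      Submodule.eq_top_of_nonempty_interior' _ (Set.nonempty_iff_ne_empty.mpr hne)
    exact hf i (LinearMap.ker_eq_top.mp this)

lemma aux_exists_ne {ι : Type*} [Finite ι] (f : ι → E →ₗ[ℂ] ℂ) (hf : ∀ i, f i ≠ 0)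
    {U : Set E} (hU : IsOpen U) (hne : U.Nonempty) : ∃ x ∈ U, ∀ i, f i x ≠ 0 := by
  obtain ⟨x, hxs, hxU⟩ := (aux_dense_ne f hf).exists_mem_open hU hne
  exact ⟨x, hxU, hxs⟩

lemma aux_smul_of_ker_le {E : Type*} [AddCommGroup E] [Module ℂ E] {f g : E →ₗ[ℂ] ℂ}
    (hf : f ≠ 0) (hle : LinearMap.ker f ≤ LinearMap.ker g) : ∃ c : ℂ, g = c • f := by
  obtain ⟨x, hx⟩ : ∃ x, f x ≠ 0 := by
    by_contra hc; push_neg at hc; exact hf (LinearMap.ext fun y => by simp [hc y])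
  refine ⟨g x / f x, LinearMap.ext fun y => ?_⟩
  have hy : y - (f y / f x) • x ∈ LinearMap.ker f := by
    simp [LinearMap.mem_ker, div_mul_cancel₀, hx]
  have h2 : g y - f y / f x * g x = 0 := by
    simpa [map_sub, map_smul, smul_eq_mul] using hle hy
  rw [sub_eq_zero] at h2
  rw [LinearMap.smul_apply, smul_eq_mul, h2]
  field_simp

lemma aux_order_lt {A B : ℂ → ℂ} (hA : ContinuousAt A 0) (hB : ContinuousAt B 0)
    {s t : ℕ} (hlt : s < t)
    (h : ∀ᶠ z in 𝓝 (0 : ℂ), A z * z ^ t = B z * z ^ s) : B 0 = 0 := by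
  have h1 : ∀ᶠ z in 𝓝[≠] (0 : ℂ), B z = A z * z ^ (t - s) := by
    filter_upwards [eventually_nhdsWithin_of_eventually_nhds h, self_mem_nhdsWithin]
      with z hz hz0
    have hzs : (z : ℂ) ^ s ≠ 0 := pow_ne_zero _ hz0
    have h3 : A z * z ^ (t - s) * z ^ s = B z * z ^ s := by
      rw [mul_assoc, ← pow_add, Nat.sub_add_cancel hlt.le]; exact hz
    exact (mul_right_cancel₀ hzs h3).symm
  have h2 : Tendsto B (𝓝[≠] (0 : ℂ)) (𝓝 (B 0)) := hB.tendsto.mono_left nhdsWithin_le_nhds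
  have h3 : Tendsto (fun z : ℂ => A z * z ^ (t - s)) (𝓝[≠] 0) (𝓝 (A 0 * 0 ^ (t - s))) :=
    (hA.mul (continuous_pow (t - s)).continuousAt).tendsto.mono_left nhdsWithin_le_nhds
  rw [zero_pow (by omega), mul_zero] at h3
  exact tendsto_nhds_unique (Filter.Tendsto.congr' h1 h2) h3

lemma aux_order_eq {A B : ℂ → ℂ} (hA : ContinuousAt A 0) (hB : ContinuousAt B 0)
    (hA0 : A 0 ≠ 0) (hB0 : B 0 ≠ 0) {s t : ℕ}
    (h : ∀ᶠ z in 𝓝 (0 : ℂ), A z * z ^ t = B z * z ^ s) : s = t := by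
  rcases lt_trichotomy s t with hlt | he | hlt
  · exact absurd (aux_order_lt hA hB hlt h) hB0
  · exact he
  · exact absurd (aux_order_lt hB hA hlt (h.mono fun z hz => hz.symm)) hA0

lemma aux_match {n p : ℕ} (L : Fin n → E →ₗ[ℂ] ℂ) (L' : Fin p → E →ₗ[ℂ] ℂ)
    (s : Fin n → ℕ) (t : Fin p → ℕ) (hs : ∀ i, 1 ≤ s i)
    (φ ψ : E → ℂ) {r : ℝ} (hr : 0 < r)
    (hφ0 : ∀ x ∈ ball (0 : E) r, φ x ≠ 0)
    (hEq : ∀ x ∈ ball (0 : E) r,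
      φ x * ∏ σ, (L' σ x) ^ t σ = ψ x * ∏ kk, (L kk x) ^ s kk)
    (i : Fin n) : ∃ σ, LinearMap.ker (L i) ≤ LinearMap.ker (L' σ) := by
  by_contra hno
  push_neg at hno
  set W := LinearMap.ker (L i) with hW
  have hres : ∀ σ : Fin p, (L' σ).comp W.subtype ≠ 0 := by
    intro σ h0
    refine hno σ fun x hx => ?_
    have h1 := LinearMap.congr_fun h0 ⟨x, hx⟩
    simpa [LinearMap.mem_ker] using h1
  obtain ⟨v, hvU, hv⟩ := aux_exists_ne (fun σ => (L' σ).comp W.subtype) hres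
    (U := Subtype.val ⁻¹' ball (0 : E) r)
    (isOpen_ball.preimage continuous_subtype_val)
    ⟨0, by simp only [Set.mem_preimage, Submodule.coe_zero]; exact mem_ball_self hr⟩
  have hvb : (v : E) ∈ ball (0 : E) r := hvU
  have h1 := hEq (v : E) hvb
  have hLiv : L i (v : E) = 0 := v.2
  have hzero : (∏ kk, (L kk (v : E)) ^ s kk) = 0 :=
    Finset.prod_eq_zero (Finset.mem_univ i)
      (by rw [hLiv, zero_pow (Nat.one_le_iff_ne_zero.mp (hs i))])
  rw [hzero, mul_zero] at h1
  refine mul_ne_zero (hφ0 _ hvb)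
    (Finset.prod_ne_zero_iff.mpr fun σ _ => pow_ne_zero _ ?_) h1
  simpa using hv σ

lemma aux_mult {n p : ℕ} (L : Fin n → E →ₗ[ℂ] ℂ) (L' : Fin p → E →ₗ[ℂ] ℂ)
    (s : Fin n → ℕ) (t : Fin p → ℕ)
    (φ ψ : E → ℂ) {r : ℝ} (hr : 0 < r)
    (hφc : ∀ x ∈ ball (0 : E) r, ContinuousAt φ x)
    (hψc : ∀ x ∈ ball (0 : E) r, ContinuousAt ψ x)
    (hφ0 : ∀ x ∈ ball (0 : E) r, φ x ≠ 0)
    (hψ0 : ∀ x ∈ ball (0 : E) r, ψ x ≠ 0)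
    (hEq : ∀ x ∈ ball (0 : E) r,
      φ x * ∏ σ, (L' σ x) ^ t σ = ψ x * ∏ kk, (L kk x) ^ s kk)
    (i : Fin n) (σi : Fin p) {c : ℂ} (hc : c ≠ 0) (hLL : L i = c • L' σi) (hLi : L i ≠ 0)
    (hkL : ∀ kk, kk ≠ i → ¬ LinearMap.ker (L i) ≤ LinearMap.ker (L kk))
    (hkL' : ∀ σ', σ' ≠ σi → ¬ LinearMap.ker (L i) ≤ LinearMap.ker (L' σ')) :
    s i = t σi := by
  set W := LinearMap.ker (L i) with hW
  -- pick x₀ in ker (L i) ∩ ball, avoiding the other kernels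
  have hres : ∀ q : {kk : Fin n // kk ≠ i} ⊕ {σ' : Fin p // σ' ≠ σi},
      (Sum.elim (fun kk : {kk : Fin n // kk ≠ i} => (L kk.1).comp W.subtype)
        (fun σ' : {σ' : Fin p // σ' ≠ σi} => (L' σ'.1).comp W.subtype)) q ≠ 0 := by
    rintro (⟨kk, hkk⟩ | ⟨σ', hσ'⟩) h0
    · refine hkL kk hkk fun x hx => ?_
      have h1 := LinearMap.congr_fun h0 ⟨x, hx⟩
      simpa [LinearMap.mem_ker] using h1
    · refine hkL' σ' hσ' fun x hx => ?_
      have h1 := LinearMap.congr_fun h0 ⟨x, hx⟩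
      simpa [LinearMap.mem_ker] using h1
  obtain ⟨x₀, hx₀U, hx₀⟩ := aux_exists_ne _ hres
    (U := Subtype.val ⁻¹' ball (0 : E) r)
    (isOpen_ball.preimage continuous_subtype_val)
    ⟨0, by simp only [Set.mem_preimage, Submodule.coe_zero]; exact mem_ball_self hr⟩
  have hx₀b : (x₀ : E) ∈ ball (0 : E) r := hx₀U
  have hx₀L : ∀ kk, kk ≠ i → L kk (x₀ : E) ≠ 0 := fun kk hkk => by
    simpa using hx₀ (Sum.inl ⟨kk, hkk⟩)
  have hx₀L' : ∀ σ', σ' ≠ σi → L' σ' (x₀ : E) ≠ 0 := fun σ' hσ' => by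
    simpa using hx₀ (Sum.inr ⟨σ', hσ'⟩)
  have hLix₀ : L i (x₀ : E) = 0 := x₀.2
  have hL'x₀ : L' σi (x₀ : E) = 0 := by
    have := hLix₀
    rw [hLL] at this
    simpa [hc] using this
  -- pick direction w transversal to ker (L i)
  obtain ⟨w, hw⟩ : ∃ w : E, L i w ≠ 0 := by
    by_contra hcw; push_neg at hcw; exact hLi (LinearMap.ext fun y => by simp [hcw y])
  have hL'w : L' σi w ≠ 0 := by
    intro h0; apply hw; rw [hLL]; simp [h0]
  -- the affine line
  set x : ℂ → E := fun z => (x₀ : E) + z • w with hx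
  have hxcont : Continuous x := continuous_const.add (continuous_id.smul continuous_const)
  have hx0 : x 0 = (x₀ : E) := by simp [hx]
  have hLx : ∀ z, L i (x z) = z * L i w := by
    intro z; simp [hx, hLix₀, smul_eq_mul]
  have hL'x : ∀ z, L' σi (x z) = z * L' σi w := by
    intro z; simp [hx, hL'x₀, smul_eq_mul]
  -- one-variable functions
  set A : ℂ → ℂ := fun z => φ (x z) * (L' σi w) ^ t σi *
      ∏ σ' ∈ univ.erase σi, (L' σ' (x z)) ^ t σ' with hA
  set B : ℂ → ℂ := fun z => ψ (x z) * (L i w) ^ s i *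
      ∏ kk ∈ univ.erase i, (L kk (x z)) ^ s kk with hB
  have hmem : ∀ᶠ z in 𝓝 (0 : ℂ), x z ∈ ball (0 : E) r := by
    have : Tendsto x (𝓝 0) (𝓝 (x 0)) := hxcont.continuousAt
    rw [hx0] at this
    exact this.eventually (isOpen_ball.eventually_mem hx₀b)
  have hkey : ∀ᶠ z in 𝓝 (0 : ℂ), A z * z ^ t σi = B z * z ^ s i := by
    filter_upwards [hmem] with z hz
    have h1 := hEq (x z) hz
    have e1 : A z * z ^ t σi = φ (x z) * ∏ σ', (L' σ' (x z)) ^ t σ' := by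
      rw [← Finset.mul_prod_erase univ _ (Finset.mem_univ σi), hL'x z, mul_pow]
      ring
    have e2 : B z * z ^ s i = ψ (x z) * ∏ kk, (L kk (x z)) ^ s kk := by
      rw [← Finset.mul_prod_erase univ _ (Finset.mem_univ i), hLx z, mul_pow]
      ring
    rw [e1, e2]; exact h1
  -- continuity and nonvanishing at 0
  have hφx : ContinuousAt (fun z => φ (x z)) 0 := by
    show ContinuousAt (φ ∘ x) 0
    refine ContinuousAt.comp ?_ hxcont.continuousAt
    rw [hx0]; exact hφc _ hx₀b
  have hψx : ContinuousAt (fun z => ψ (x z)) 0 := by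
    show ContinuousAt (ψ ∘ x) 0
    refine ContinuousAt.comp ?_ hxcont.continuousAt
    rw [hx0]; exact hψc _ hx₀b
  have hprodA : Continuous fun z => ∏ σ' ∈ univ.erase σi, (L' σ' (x z)) ^ t σ' :=
    continuous_finset_prod _ fun σ' _ =>
      ((L' σ').continuous_of_finiteDimensional.comp hxcont).pow _
  have hprodB : Continuous fun z => ∏ kk ∈ univ.erase i, (L kk (x z)) ^ s kk :=
    continuous_finset_prod _ fun kk _ =>
      ((L kk).continuous_of_finiteDimensional.comp hxcont).pow _
  have hAc : ContinuousAt A 0 := (hφx.mul continuousAt_const).mul hprodA.continuousAt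
  have hBc : ContinuousAt B 0 := (hψx.mul continuousAt_const).mul hprodB.continuousAt
  have hA0 : A 0 ≠ 0 := by
    refine mul_ne_zero (mul_ne_zero ?_ (pow_ne_zero _ hL'w)) ?_
    · rw [hx0]; exact hφ0 _ hx₀b
    · refine Finset.prod_ne_zero_iff.mpr fun σ' hσ' => pow_ne_zero _ ?_
      rw [hx0]
      exact hx₀L' σ' (Finset.ne_of_mem_erase hσ')
  have hB0 : B 0 ≠ 0 := by
    refine mul_ne_zero (mul_ne_zero ?_ (pow_ne_zero _ hw)) ?_
    · rw [hx0]; exact hψ0 _ hx₀b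
    · refine Finset.prod_ne_zero_iff.mpr fun kk hkk => pow_ne_zero _ ?_
      rw [hx0]
      exact hx₀L kk (Finset.ne_of_mem_erase hkk)
  exact aux_order_eq hAc hBc hA0 hB0 hkey

end Helpers

/-- Uniqueness of the representation of a polar-type fraction: if
`h(ℓ_1,…,ℓ_m)/(L_1^{s_1} ⋯ L_n^{s_n}) = g(ℓ'_1,…,ℓ'_j)/((L'_1)^{t_1} ⋯ (L'_p)^{t_p})`
as meromorphic germs at `0`, with `h, g` holomorphic germs at zero nonvanishing at zero,
each family `{ℓ, L}` and `{ℓ', L'}` linearly independent, and no two `L`'s (resp. `L'`'s)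
proportional, then `n = p` and after reordering each `L_i` is a nonzero scalar multiple
of `L'_i` with `s_i = t_i`. -/
theorem stmt1 (k m j n p : ℕ)
    (h : (Fin m → ℂ) → ℂ) (g : (Fin j → ℂ) → ℂ)
    (hh : AnalyticAt ℂ h 0) (hg : AnalyticAt ℂ g 0)
    (hh0 : h 0 ≠ 0) (hg0 : g 0 ≠ 0)
    (ell : Fin m → (Fin k → ℂ) →ₗ[ℂ] ℂ) (L : Fin n → (Fin k → ℂ) →ₗ[ℂ] ℂ)
    (ell' : Fin j → (Fin k → ℂ) →ₗ[ℂ] ℂ) (L' : Fin p → (Fin k → ℂ) →ₗ[ℂ] ℂ)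
    (s : Fin n → ℕ) (t : Fin p → ℕ) (hs : ∀ i, 1 ≤ s i) (ht : ∀ i, 1 ≤ t i)
    (hind1 : LinearIndependent ℂ (Sum.elim ell L))
    (hind2 : LinearIndependent ℂ (Sum.elim ell' L'))
    (hprop1 : ∀ i i' : Fin n, i ≠ i' → ∀ c : ℂ, L i ≠ c • L i')
    (hprop2 : ∀ i i' : Fin p, i ≠ i' → ∀ c : ℂ, L' i ≠ c • L' i')
    (heq : ∀ᶠ x in nhds (0 : Fin k → ℂ),
      ((∀ i, L i x ≠ 0) ∧ (∀ i, L' i x ≠ 0)) →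
        h (fun a => ell a x) / ∏ i, (L i x) ^ s i
          = g (fun a => ell' a x) / ∏ i, (L' i x) ^ t i) :
    n = p ∧ ∃ σ : Fin n ≃ Fin p, ∀ i,
      s i = t (σ i) ∧ ∃ c : ℂ, c ≠ 0 ∧ L i = c • L' (σ i) := by
  classical
  have hLne : ∀ i, L i ≠ 0 := fun i => hind1.ne_zero (Sum.inr i)
  have hL'ne : ∀ i, L' i ≠ 0 := fun i => hind2.ne_zero (Sum.inr i)
  set lm : (Fin k → ℂ) →ₗ[ℂ] (Fin m → ℂ) := LinearMap.pi ell with hlm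
  set lm' : (Fin k → ℂ) →ₗ[ℂ] (Fin j → ℂ) := LinearMap.pi ell' with hlm'
  have htend : Tendsto lm (𝓝 0) (𝓝 0) := by
    have := lm.continuous_of_finiteDimensional.tendsto 0
    rwa [map_zero] at this
  have htend' : Tendsto lm' (𝓝 0) (𝓝 0) := by
    have := lm'.continuous_of_finiteDimensional.tendsto 0
    rwa [map_zero] at this
  have hAh : ∀ᶠ y in 𝓝 (0 : Fin m → ℂ), ContinuousAt h y ∧ h y ≠ 0 :=
    (hh.eventually_analyticAt.mono fun y hy => hy.continuousAt).and
      (hh.continuousAt.eventually_ne hh0)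
  have hAg : ∀ᶠ y in 𝓝 (0 : Fin j → ℂ), ContinuousAt g y ∧ g y ≠ 0 :=
    (hg.eventually_analyticAt.mono fun y hy => hy.continuousAt).and
      (hg.continuousAt.eventually_ne hg0)
  have big := ((htend.eventually hAh).and (htend'.eventually hAg)).and heq
  rw [_root_.eventually_nhds_iff] at big
  obtain ⟨u, hu, huo, hu0⟩ := big
  obtain ⟨r, hr, hball⟩ := Metric.isOpen_iff.mp huo 0 hu0
  set φ : (Fin k → ℂ) → ℂ := fun x => h (lm x) with hφ
  set ψ : (Fin k → ℂ) → ℂ := fun x => g (lm' x) with hψ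
  have hφc : ∀ x ∈ ball (0 : Fin k → ℂ) r, ContinuousAt φ x := by
    intro x hx
    exact ContinuousAt.comp (hu x (hball hx)).1.1.1 lm.continuous_of_finiteDimensional.continuousAt
  have hψc : ∀ x ∈ ball (0 : Fin k → ℂ) r, ContinuousAt ψ x := by
    intro x hx
    exact ContinuousAt.comp (hu x (hball hx)).1.2.1 lm'.continuous_of_finiteDimensional.continuousAt
  have hφ0 : ∀ x ∈ ball (0 : Fin k → ℂ) r, φ x ≠ 0 := fun x hx => (hu x (hball hx)).1.1.2
  have hψ0 : ∀ x ∈ ball (0 : Fin k → ℂ) r, ψ x ≠ 0 := fun x hx => (hu x (hball hx)).1.2.2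
  -- dense set where all linear forms are nonzero
  have hD : Dense {x : Fin k → ℂ | ∀ q : Fin n ⊕ Fin p, Sum.elim L L' q x ≠ 0} := by
    refine aux_dense_ne _ ?_
    rintro (i1 | i1)
    · exact hLne i1
    · exact hL'ne i1
  -- equality on ball ∩ dense set
  have hEqD : ∀ y ∈ ball (0 : Fin k → ℂ) r ∩
      {x : Fin k → ℂ | ∀ q : Fin n ⊕ Fin p, Sum.elim L L' q x ≠ 0},
      φ y * ∏ σ, (L' σ y) ^ t σ = ψ y * ∏ kk, (L kk y) ^ s kk := by
    rintro y ⟨hyb, hyD⟩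
    have hc1 : ∀ i1, L i1 y ≠ 0 := fun i1 => hyD (Sum.inl i1)
    have hc2 : ∀ i1, L' i1 y ≠ 0 := fun i1 => hyD (Sum.inr i1)
    have hdiv := (hu y (hball hyb)).2 ⟨hc1, hc2⟩
    have hd1 : (∏ i1, (L i1 y) ^ s i1) ≠ 0 :=
      Finset.prod_ne_zero_iff.mpr fun i1 _ => pow_ne_zero _ (hc1 i1)
    have hd2 : (∏ i1, (L' i1 y) ^ t i1) ≠ 0 :=
      Finset.prod_ne_zero_iff.mpr fun i1 _ => pow_ne_zero _ (hc2 i1)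
    rw [div_eq_div_iff hd1 hd2] at hdiv
    exact hdiv
  have hEqOn : ∀ x ∈ ball (0 : Fin k → ℂ) r,
      φ x * ∏ σ, (L' σ x) ^ t σ = ψ x * ∏ kk, (L kk x) ^ s kk := by
    intro x hx
    set T := ball (0 : Fin k → ℂ) r ∩
      {x : Fin k → ℂ | ∀ q : Fin n ⊕ Fin p, Sum.elim L L' q x ≠ 0} with hT
    have hclo : x ∈ closure T := hD.open_subset_closure_inter isOpen_ball hx
    have hne : (𝓝[T] x).NeBot := mem_closure_iff_nhdsWithin_neBot.mp hclo
    have hprod1 : Continuous fun y : Fin k → ℂ => ∏ σ, (L' σ y) ^ t σ :=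
      continuous_finset_prod _ fun σ _ => (L' σ).continuous_of_finiteDimensional.pow _
    have hprod2 : Continuous fun y : Fin k → ℂ => ∏ kk, (L kk y) ^ s kk :=
      continuous_finset_prod _ fun kk _ => (L kk).continuous_of_finiteDimensional.pow _
    have hF : Tendsto (fun y => φ y * ∏ σ, (L' σ y) ^ t σ) (𝓝[T] x)
        (𝓝 (φ x * ∏ σ, (L' σ x) ^ t σ)) :=
      (((hφc x hx).mul hprod1.continuousAt).tendsto).mono_left nhdsWithin_le_nhds
    have hG : Tendsto (fun y => ψ y * ∏ kk, (L kk y) ^ s kk) (𝓝[T] x)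
        (𝓝 (ψ x * ∏ kk, (L kk x) ^ s kk)) :=
      (((hψc x hx).mul hprod2.continuousAt).tendsto).mono_left nhdsWithin_le_nhds
    have hevEq : (fun y => φ y * ∏ σ, (L' σ y) ^ t σ) =ᶠ[𝓝[T] x]
        fun y => ψ y * ∏ kk, (L kk y) ^ s kk :=
      eventually_nhdsWithin_of_forall hEqD
    exact tendsto_nhds_unique (Filter.Tendsto.congr' hevEq hF) hG
  -- matching in both directions
  have hmatch : ∀ i : Fin n, ∃ σ : Fin p, ∃ c : ℂ, c ≠ 0 ∧ L i = c • L' σ := by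
    intro i
    obtain ⟨σ, hσ⟩ := aux_match L L' s t hs φ ψ hr hφ0 hEqOn i
    obtain ⟨c, hcL⟩ := aux_smul_of_ker_le (hLne i) hσ
    have hc : c ≠ 0 := by rintro rfl; exact hL'ne σ (by simpa using hcL)
    exact ⟨σ, c⁻¹, inv_ne_zero hc, by
      rw [hcL, smul_smul, inv_mul_cancel₀ hc, one_smul]⟩
  have hmatch' : ∀ σ : Fin p, ∃ i : Fin n, ∃ c : ℂ, c ≠ 0 ∧ L' σ = c • L i := by
    intro σ
    obtain ⟨i, hσ⟩ := aux_match L' L t s ht ψ φ hr hψ0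
      (fun x hx => (hEqOn x hx).symm) σ
    obtain ⟨c, hcL⟩ := aux_smul_of_ker_le (hL'ne σ) hσ
    have hc : c ≠ 0 := by rintro rfl; exact hLne i (by simpa using hcL)
    exact ⟨i, c⁻¹, inv_ne_zero hc, by
      rw [hcL, smul_smul, inv_mul_cancel₀ hc, one_smul]⟩
  choose τ cτ hcτ hτ using hmatch
  choose τ' cτ' hcτ' hτ' using hmatch'
  have hinj : Function.Injective τ := by
    intro a b hab
    by_contra hne
    refine hprop1 a b hne (cτ a * (cτ b)⁻¹) ?_
    have hb : L' (τ b) = (cτ b)⁻¹ • L b := by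
      rw [hτ b, smul_smul, inv_mul_cancel₀ (hcτ b), one_smul]
    rw [hτ a, hab, hb, smul_smul]
  have hinj' : Function.Injective τ' := by
    intro a b hab
    by_contra hne
    refine hprop2 a b hne (cτ' a * (cτ' b)⁻¹) ?_
    have hb : L (τ' b) = (cτ' b)⁻¹ • L' b := by
      rw [hτ' b, smul_smul, inv_mul_cancel₀ (hcτ' b), one_smul]
    rw [hτ' a, hab, hb, smul_smul]
  have hnp : n = p := le_antisymm
    (by simpa using Fintype.card_le_of_injective τ hinj)
    (by simpa using Fintype.card_le_of_injective τ' hinj')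
  have hbij : Function.Bijective τ :=
    (Fintype.bijective_iff_injective_and_card τ).2 ⟨hinj, by simp [hnp]⟩
  refine ⟨hnp, Equiv.ofBijective τ hbij, fun i => ?_⟩
  refine ⟨?_, cτ i, hcτ i, hτ i⟩
  refine aux_mult L L' s t φ ψ hr hφc hψc hφ0 hψ0 hEqOn i (τ i) (hcτ i) (hτ i) (hLne i)
    ?_ ?_
  · intro kk hkk hle
    obtain ⟨d, hd⟩ := aux_smul_of_ker_le (hLne i) hle
    exact hprop1 kk i hkk d hd
  · intro σ' hσ' hle
    obtain ⟨d, hd⟩ := aux_smul_of_ker_le (hLne i) hle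
    exact hprop2 σ' (τ i) hσ' (d * cτ i) (by rw [hd, hτ i, smul_smul])
end

section
/- Any fraction 1/(L_1^{s_1} ⋯ L_n^{s_n}) with L_1, ..., L_n nonzero vectors in an 𝔽-vector space (viewed as linear forms) and positive integer exponents s_i can be written as a finite 𝔽-linear combination Σ_i a_i/(M_{i1}^{t_{i1}} ⋯ M_{in_i}^{t_{in_i}}) where each {M_{i1}, ..., M_{in_i}} is a linearly independent subset of {L_1, ..., L_n} and the t_{ij} are positive integers. -/
open Finset

section aux
variable {𝔽 : Type*} [Field 𝔽] {V : Type*} [AddCommGroup V] [Module 𝔽 V]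
variable {n : ℕ} (L : Fin n → (V →ₗ[𝔽] 𝔽))

def Decomp (f : V → 𝔽) : Prop :=
  ∃ (ι : Type) (_ : Fintype ι) (a : ι → 𝔽) (m : ι → ℕ)
    (M : (i : ι) → Fin (m i) → Fin n) (t : (i : ι) → Fin (m i) → ℕ),
    (∀ i, LinearIndependent 𝔽 (fun j => L (M i j))) ∧
    (∀ i j, 1 ≤ t i j) ∧
    ∀ x : V, (∀ i, L i x ≠ 0) → f x = ∑ i, a i / ∏ j, (L (M i j) x) ^ t i j

variable {L}

theorem Decomp.congr {f g : V → 𝔽} (h : Decomp L g)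
    (hfg : ∀ x : V, (∀ i, L i x ≠ 0) → f x = g x) : Decomp L f := by
  obtain ⟨ι, _, a, m, M, t, h1, h2, h3⟩ := h
  exact ⟨ι, ‹_›, a, m, M, t, h1, h2, fun x hx => (hfg x hx).trans (h3 x hx)⟩

theorem Decomp.zero : Decomp L (fun _ => (0 : 𝔽)) :=
  ⟨PEmpty, inferInstance, PEmpty.elim, PEmpty.elim, fun i => i.elim, fun i => i.elim,
    fun i => i.elim, fun i => i.elim, fun x _ => by simp⟩

theorem Decomp.smul {f : V → 𝔽} (c : 𝔽) (h : Decomp L f) :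
    Decomp L (fun x => c * f x) := by
  obtain ⟨ι, _, a, m, M, t, h1, h2, h3⟩ := h
  refine ⟨ι, ‹_›, fun i => c * a i, m, M, t, h1, h2, fun x hx => ?_⟩
  show c * f x = _
  rw [h3 x hx, Finset.mul_sum]
  exact Finset.sum_congr rfl fun i _ => by rw [mul_div_assoc]

theorem Decomp.add {f g : V → 𝔽} (hf : Decomp L f) (hg : Decomp L g) :
    Decomp L (fun x => f x + g x) := by
  obtain ⟨ι, _, a, m, M, t, h1, h2, h3⟩ := hf
  obtain ⟨ι', _, a', m', M', t', h1', h2', h3'⟩ := hg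
  refine ⟨ι ⊕ ι', inferInstance, Sum.elim a a', Sum.elim m m',
    Sum.rec M M', Sum.rec t t', fun i => ?_, fun i => ?_, fun x hx => ?_⟩
  · cases i with
    | inl i => exact h1 i
    | inr i => exact h1' i
  · cases i with
    | inl i => exact h2 i
    | inr i => exact h2' i
  · show f x + g x = _
    rw [h3 x hx, h3' x hx, Fintype.sum_sum_type]; rfl

theorem Decomp.sum {κ : Type*} (K : Finset κ) (f : κ → V → 𝔽)
    (h : ∀ k ∈ K, Decomp L (f k)) :
    Decomp L (fun x => ∑ k ∈ K, f k x) := by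
  classical
  induction K using Finset.induction with
  | empty => exact Decomp.zero.congr (by simp)
  | @insert k K hk ih =>
      exact ((h k (mem_insert_self k K)).add
        (ih fun k' hk' => h k' (mem_insert_of_mem hk'))).congr
        (fun x hx => by rw [Finset.sum_insert hk])

theorem decomp_base (s : Fin n → ℕ)
    (hind : LinearIndependent 𝔽 (fun i : {i // i ∈ univ.filter (fun i => 0 < s i)} => L i)) :
    Decomp L (fun x => (∏ i, (L i x) ^ s i)⁻¹) := by
  classical
  set T : Finset (Fin n) := univ.filter (fun i => 0 < s i) with hT
  set e : Fin T.card ≃ {i // i ∈ T} := T.equivFin.symm with he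
  have hind2 : LinearIndependent 𝔽 (fun j : Fin T.card => L (e j)) :=
    hind.comp e e.injective
  refine ⟨Fin 1, inferInstance, fun _ => 1, fun _ => T.card, fun _ j => (e j : Fin n),
    fun _ j => s (e j), fun _ => hind2, fun _ j => (mem_filter.mp (e j).2).2,
    fun x hx => ?_⟩
  show (∏ i, (L i x) ^ s i)⁻¹ = _
  rw [Fin.sum_univ_one, one_div]
  congr 1
  rw [← Finset.prod_subset (subset_univ T) (fun i _ hi => by
    simp [hT] at hi; simp [hi])]
  rw [← Finset.prod_attach T (fun i => L i x ^ s i)]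
  exact (Equiv.prod_comp e (fun i : {i // i ∈ T} => L i x ^ s i)).symm

set_option maxHeartbeats 1000000 in
theorem decomp_main (hL : ∀ i, L i ≠ 0) (s : Fin n → ℕ) :
    Decomp L (fun x => (∏ i, (L i x) ^ s i)⁻¹) := by
  classical
  suffices h : ∀ (μ : ℕ) (s : Fin n → ℕ), (∑ i, s i * 2 ^ (i : ℕ)) < μ →
      Decomp L (fun x => (∏ i, (L i x) ^ s i)⁻¹) from
    h ((∑ i, s i * 2 ^ (i : ℕ)) + 1) s (Nat.lt_succ_self _)
  intro μ
  induction μ with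
  | zero => exact fun s hs => absurd hs (Nat.not_lt_zero _)
  | succ μ ih =>
    intro s hμ
    by_cases hind : LinearIndependent 𝔽 (fun i : {i // i ∈ univ.filter (fun i => 0 < s i)} => L i)
    · exact decomp_base s hind
    · set T : Finset (Fin n) := univ.filter (fun i => 0 < s i) with hT
      obtain ⟨g, hg0, i₀, hi₀⟩ := Fintype.not_linearIndependent_iff.mp hind
      set c : Fin n → 𝔽 := fun i => if h : i ∈ T then g ⟨i, h⟩ else 0 with hc
      set C : Finset (Fin n) := univ.filter (fun i => c i ≠ 0) with hCdef
      have hCne : C.Nonempty := ⟨i₀, by simpa [hCdef, hc] using hi₀⟩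
      set j : Fin n := C.min' hCne with hj
      have hjC : j ∈ C := C.min'_mem hCne
      set K : Finset (Fin n) := C.erase j with hK
      have hCT : C ⊆ T := by
        intro i hi
        have hci : c i ≠ 0 := (mem_filter.mp hi).2
        by_contra hiT
        exact hci (by simp [hc, hiT])
      -- the linear relation
      have hrel : ∑ i ∈ C, c i • L i = 0 := by
        rw [Finset.sum_subset hCT (fun i hiT hiC => by
          have hci : c i = 0 := by
            by_contra hne; exact hiC (mem_filter.mpr ⟨mem_univ i, hne⟩)
          simp [hci])]
        rw [← Finset.sum_attach T (fun i => c i • L i)]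
        rw [← hg0]
        exact Finset.sum_congr rfl (fun i _ => by simp [hc, i.2])
      have hcj : c j ≠ 0 := (mem_filter.mp hjC).2
      have hKne : K.Nonempty := by
        rw [Finset.nonempty_iff_ne_empty]
        intro hKe
        have hCj : C = {j} := by
          apply Finset.eq_singleton_iff_unique_mem.mpr ⟨hjC, fun y hy => ?_⟩
          by_contra hyj
          exact (Finset.notMem_empty y) (hKe ▸ Finset.mem_erase.mpr ⟨hyj, hy⟩)
        rw [hCj, Finset.sum_singleton] at hrel
        exact hL j ((smul_eq_zero.mp hrel).resolve_left hcj)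
      have hkC : ∀ k ∈ K, k ∈ C := fun k hk => mem_of_mem_erase hk
      have hks : ∀ k ∈ K, 1 ≤ s k := fun k hk =>
        (mem_filter.mp (hCT (hkC k hk))).2
      have hkj : ∀ k ∈ K, k ≠ j := fun k hk => (mem_erase.mp hk).1
      have hjk : ∀ k ∈ K, (j : ℕ) < (k : ℕ) := by
        intro k hk
        exact Fin.lt_iff_val_lt_val.mp
          (lt_of_le_of_ne (C.min'_le k (hkC k hk)) (Ne.symm (hkj k hk)))
      set s' : Fin n → Fin n → ℕ :=
        fun k => Function.update (Function.update s k (s k - 1)) j (s j + 1) with hs'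
      have hs'j : ∀ k ∈ K, s' k j = s j + 1 := fun k hk => by
        simp only [hs', Function.update_self]
      have hs'k : ∀ k ∈ K, s' k k = s k - 1 := fun k hk => by
        simp only [hs']
        rw [Function.update_of_ne (hkj k hk), Function.update_self]
      have hs'i : ∀ k ∈ K, ∀ i, i ≠ j → i ≠ k → s' k i = s i := fun k hk i hij hik => by
        simp only [hs']
        rw [Function.update_of_ne hij, Function.update_of_ne hik]
      have hmu : ∀ k ∈ K, (∑ i, s' k i * 2 ^ (i : ℕ)) < ∑ i, s i * 2 ^ (i : ℕ) := by
        intro k hk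
        have hkmem : k ∈ univ.erase j := mem_erase.mpr ⟨hkj k hk, mem_univ k⟩
        have e1 : ∑ i, s i * 2 ^ (i : ℕ) =
            s j * 2 ^ (j : ℕ) + (s k * 2 ^ (k : ℕ) +
              ∑ i ∈ (univ.erase j).erase k, s i * 2 ^ (i : ℕ)) := by
          rw [← Finset.add_sum_erase univ _ (mem_univ j), ← Finset.add_sum_erase _ _ hkmem]
        have e2 : ∑ i, s' k i * 2 ^ (i : ℕ) =
            (s j + 1) * 2 ^ (j : ℕ) + ((s k - 1) * 2 ^ (k : ℕ) +
              ∑ i ∈ (univ.erase j).erase k, s i * 2 ^ (i : ℕ)) := by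
          rw [show ∑ i ∈ (univ.erase j).erase k, s i * 2 ^ (i : ℕ) =
              ∑ i ∈ (univ.erase j).erase k, s' k i * 2 ^ (i : ℕ) from
            Finset.sum_congr rfl (fun i hi => by
              rw [hs'i k hk i (mem_erase.mp (mem_of_mem_erase hi)).1 (mem_erase.mp hi).1])]
          rw [← hs'j k hk, ← hs'k k hk]
          rw [← Finset.add_sum_erase univ _ (mem_univ j), ← Finset.add_sum_erase _ _ hkmem]
        rw [e1, e2]
        have hAB : (2:ℕ) ^ (j : ℕ) < 2 ^ (k : ℕ) :=
          Nat.pow_lt_pow_right (by omega) (hjk k hk)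
        have h1 : (s j + 1) * 2 ^ (j : ℕ) = s j * 2 ^ (j : ℕ) + 2 ^ (j : ℕ) := by ring
        have h2 : (s k - 1) * 2 ^ (k : ℕ) + 2 ^ (k : ℕ) = s k * 2 ^ (k : ℕ) := by
          rw [Nat.sub_one_mul]
          have : 2 ^ (k : ℕ) ≤ s k * 2 ^ (k : ℕ) :=
            Nat.le_mul_of_pos_left _ (hks k hk)
          omega
        omega
      refine (Decomp.sum K (fun k x => (-(c k) / c j) * (∏ i, (L i x) ^ s' k i)⁻¹)
        (fun k hk => Decomp.smul _ (ih (s' k)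
          (lt_of_lt_of_le (hmu k hk) (Nat.lt_succ_iff.mp hμ))))).congr ?_
      intro x hx
      show (∏ i, (L i x) ^ s i)⁻¹ = _
      have hprodne : (∏ i, (L i x) ^ s i) ≠ 0 :=
        Finset.prod_ne_zero_iff.mpr (fun i _ => pow_ne_zero _ (hx i))
      have hprod : ∀ k ∈ K, (∏ i, (L i x) ^ s' k i)⁻¹ =
          L k x * (L j x)⁻¹ * (∏ i, (L i x) ^ s i)⁻¹ := by
        intro k hk
        have hkmem : k ∈ univ.erase j := mem_erase.mpr ⟨hkj k hk, mem_univ k⟩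
        have e1 : ∏ i, (L i x) ^ s i =
            (L j x) ^ s j * ((L k x) ^ s k *
              ∏ i ∈ (univ.erase j).erase k, (L i x) ^ s i) := by
          rw [← Finset.mul_prod_erase univ _ (mem_univ j), ← Finset.mul_prod_erase _ _ hkmem]
        have e2 : ∏ i, (L i x) ^ s' k i =
            (L j x) ^ (s j + 1) * ((L k x) ^ (s k - 1) *
              ∏ i ∈ (univ.erase j).erase k, (L i x) ^ s i) := by
          rw [show ∏ i ∈ (univ.erase j).erase k, (L i x) ^ s i =
              ∏ i ∈ (univ.erase j).erase k, (L i x) ^ s' k i from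
            Finset.prod_congr rfl (fun i hi => by
              rw [hs'i k hk i (mem_erase.mp (mem_of_mem_erase hi)).1 (mem_erase.mp hi).1])]
          rw [← hs'j k hk, ← hs'k k hk]
          rw [← Finset.mul_prod_erase univ _ (mem_univ j), ← Finset.mul_prod_erase _ _ hkmem]
        have hR : (∏ i ∈ (univ.erase j).erase k, (L i x) ^ s i) ≠ 0 :=
          Finset.prod_ne_zero_iff.mpr (fun i _ => pow_ne_zero _ (hx i))
        have hpk : (L k x) ^ s k = (L k x) ^ (s k - 1) * L k x := by
          conv_lhs => rw [show s k = (s k - 1) + 1 from (Nat.succ_pred_eq_of_pos (hks k hk)).symm]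
          rw [pow_succ]
        have hA : L j x ≠ 0 := hx j
        have hB : L k x ≠ 0 := hx k
        have hBp : (L k x) ^ (s k - 1) ≠ 0 := pow_ne_zero _ hB
        have hAp : (L j x) ^ (s j) ≠ 0 := pow_ne_zero _ hA
        have key : ∀ a b p q r : 𝔽, a ≠ 0 → b ≠ 0 → p ≠ 0 → q ≠ 0 → r ≠ 0 →
            ((p * a) * (q * r))⁻¹ = b * a⁻¹ * (p * (q * b * r))⁻¹ := by
          intro a b p q r ha hb hp hq hr
          field_simp
        rw [e1, e2, hpk, pow_succ]
        exact key _ _ _ _ _ hA hB hAp hBp hR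
      have hsx : ∑ i ∈ C, c i * L i x = 0 := by
        have := congrArg (fun φ : V →ₗ[𝔽] 𝔽 => φ x) hrel
        simpa using this
      have hCins : C = insert j K := (Finset.insert_erase hjC).symm
      rw [hCins, Finset.sum_insert (notMem_erase _ _)] at hsx
      have hsumK : ∑ k ∈ K, -(c k) * L k x = c j * L j x := by
        have h1 : ∑ k ∈ K, -(c k) * L k x = -∑ k ∈ K, c k * L k x := by
          rw [← Finset.sum_neg_distrib]
          exact Finset.sum_congr rfl (fun k _ => (neg_mul _ _))
        rw [h1, show ∑ k ∈ K, c k * L k x = -(c j * L j x) from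
          eq_neg_of_add_eq_zero_right hsx, neg_neg]
      calc (∏ i, (L i x) ^ s i)⁻¹
          = (c j * L j x) * ((c j)⁻¹ * (L j x)⁻¹ * (∏ i, (L i x) ^ s i)⁻¹) := by
            rw [show c j * L j x * ((c j)⁻¹ * (L j x)⁻¹ * (∏ i, (L i x) ^ s i)⁻¹) =
              ((c j) * (c j)⁻¹) * ((L j x) * (L j x)⁻¹) * (∏ i, (L i x) ^ s i)⁻¹ from by ring,
              mul_inv_cancel₀ hcj, mul_inv_cancel₀ (hx j), one_mul, one_mul]
        _ = (∑ k ∈ K, -(c k) * L k x) * ((c j)⁻¹ * (L j x)⁻¹ * (∏ i, (L i x) ^ s i)⁻¹) := by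
            rw [hsumK]
        _ = ∑ k ∈ K, (-(c k) / c j) * (∏ i, (L i x) ^ s' k i)⁻¹ := by
            rw [Finset.sum_mul]
            exact Finset.sum_congr rfl (fun k hk => by
              rw [hprod k hk, div_eq_mul_inv]; ring)

end aux

/-- Any fraction `1/(L_1^{s_1} ⋯ L_n^{s_n})` with `L_1,…,L_n` nonzero linear forms on an
`𝔽`-vector space (`𝔽` a subfield of `ℝ`, encoded as a field together with an embedding
into `ℝ`) and positive exponents can be rewritten as a finite `𝔽`-linear combination
`Σ_i a_i / (M_{i1}^{t_{i1}} ⋯ M_{in_i}^{t_{in_i}})` where each `{M_{i1},…,M_{in_i}}` is a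
linearly independent subfamily of `{L_1,…,L_n}` and the `t_{ij}` are positive integers. -/
theorem stmt2 {𝔽 : Type*} [Field 𝔽] [Algebra 𝔽 ℝ]
    {V : Type*} [AddCommGroup V] [Module 𝔽 V]
    (n : ℕ) (L : Fin n → (V →ₗ[𝔽] 𝔽)) (hL : ∀ i, L i ≠ 0)
    (s : Fin n → ℕ) (hs : ∀ i, 1 ≤ s i) :
    ∃ (N : ℕ) (a : Fin N → 𝔽) (m : Fin N → ℕ)
      (M : (i : Fin N) → Fin (m i) → Fin n)
      (t : (i : Fin N) → Fin (m i) → ℕ),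
      (∀ i, LinearIndependent 𝔽 (fun j => L (M i j))) ∧
      (∀ i j, 1 ≤ t i j) ∧
      ∀ x : V, (∀ i, L i x ≠ 0) →
        (∏ i, (L i x) ^ s i)⁻¹ = ∑ i, a i / ∏ j, (L (M i j) x) ^ t i j := by
  obtain ⟨ι, _, a, m, M, t, h1, h2, h3⟩ := decomp_main hL s
  set e : Fin (Fintype.card ι) ≃ ι := (Fintype.equivFin ι).symm with he
  refine ⟨Fintype.card ι, fun i => a (e i), fun i => m (e i), fun i j => M (e i) j,
    fun i j => t (e i) j, fun i => h1 (e i), fun i j => h2 (e i) j, fun x hx => ?_⟩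
  exact (h3 x hx).trans
    (Equiv.sum_comp e (fun i => a i / ∏ j, (L (M i j) x) ^ t i j)).symm
end

section
/- Let f be a meromorphic germ at zero with linear poles of the form f = h(L_1, ℓ_1, ..., ℓ_{k-1})/L_1, where h is holomorphic at zero and {L_1, ℓ_1, ..., ℓ_{k-1}} is a basis of ℝ^k with Q(L_1, ℓ_j) = 0 for all j. Then f = h(0, ℓ_1, ..., ℓ_{k-1})/L_1 + g, where g is holomorphic at zero and h(0, ℓ_1, ..., ℓ_{k-1})/L_1 is a polar germ. -/
open Complex Filter Finset

noncomputable section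

/-- Pairing of a real vector (regarded as a real linear form via the standard
inner product) with a complex vector in `ℂ^k`. -/
def pairC {k : ℕ} (v : Fin k → ℝ) (x : Fin k → ℂ) : ℂ := ∑ i, (v i : ℂ) * x i

/-- A polar germ at zero on `ℂ^k` (with respect to the standard inner product on `ℝ^k`):
a germ of the form `h(ℓ_1,…,ℓ_m) / (L_1^{s_1} ⋯ L_p^{s_p})` with `h` holomorphic at `0`,
`L_1,…,L_p` linearly independent real linear forms, `ℓ_1,…,ℓ_m` linearly independent real
linear forms orthogonal to all the `L_j`, and exponents `s_j ≥ 1`. -/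
structure PolarGerm (k : ℕ) where
  m : ℕ
  p : ℕ
  num : (Fin m → ℂ) → ℂ
  num_analytic : AnalyticAt ℂ num 0
  ell : Fin m → Fin k → ℝ
  L : Fin p → Fin k → ℝ
  s : Fin p → ℕ
  s_pos : ∀ j, 1 ≤ s j
  ell_indep : LinearIndependent ℝ ell
  L_indep : LinearIndependent ℝ L
  orth : ∀ i j, ∑ t, ell i t * L j t = 0

/-- Evaluation of a polar germ. -/
def PolarGerm.eval {k : ℕ} (S : PolarGerm k) (x : Fin k → ℂ) : ℂ :=
  S.num (fun i => pairC (S.ell i) x) / ∏ j, (pairC (S.L j) x) ^ S.s j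

/-- The set where the denominator of a polar germ does not vanish. -/
def PolarGerm.Dom {k : ℕ} (S : PolarGerm k) (x : Fin k → ℂ) : Prop :=
  ∀ j, pairC (S.L j) x ≠ 0

/-- The supporting cone of a polar germ: the convex cone generated by `L_1,…,L_p`. -/
def PolarGerm.cone {k : ℕ} (S : PolarGerm k) : Set (Fin k → ℝ) :=
  {v | ∃ c : Fin S.p → ℝ, (∀ j, 0 ≤ c j) ∧ v = ∑ j, c j • S.L j}

/-- The polar order (p-order) of a polar germ: the sum of the exponents. -/
def PolarGerm.pord {k : ℕ} (S : PolarGerm k) : ℕ := ∑ j, S.s j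

/-- The polar germ with its holomorphic numerator evaluated at zero: `S(0_ℓ)`. -/
def PolarGerm.eval0 {k : ℕ} (S : PolarGerm k) (x : Fin k → ℂ) : ℂ :=
  S.num 0 / ∏ j, (pairC (S.L j) x) ^ S.s j

/-- `F` is a face of the convex cone `C`. -/
def IsFaceOf {k : ℕ} (F C : Set (Fin k → ℝ)) : Prop :=
  F ⊆ C ∧ ∀ x ∈ C, ∀ y ∈ C, x + y ∈ F → x ∈ F ∧ y ∈ F

/-- The convex cone generated by a finite family of vectors. -/
def coneOf {k p : ℕ} (L : Fin p → Fin k → ℝ) : Set (Fin k → ℝ) :=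
  {v | ∃ c : Fin p → ℝ, (∀ j, 0 ≤ c j) ∧ v = ∑ j, c j • L j}

namespace Stmt5Aux

variable {E : Type*} [NormedAddCommGroup E] [NormedSpace ℂ E]

/-- Telescoping identity for multilinear maps. -/
theorem telescope {n : ℕ} (f : ContinuousMultilinearMap ℂ (fun _ : Fin n => E) ℂ)
    (x y : E) :
    f (fun _ => x) - f (fun _ => y) =
      ∑ i : Fin n, f (fun t => if (t : ℕ) < (i : ℕ) then y
        else if t = i then x - y else x) := by
  classical
  set F : ℕ → ℂ := fun j => f (fun t => if (t : ℕ) < j then y else x) with hF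
  have h0 : F 0 = f (fun _ => x) := by simp [hF]
  have hn : F n = f (fun _ => y) := by
    simp only [hF]
    congr 1
    funext t
    simp [t.isLt]
  have key : ∀ i : Fin n, F i - F (i + 1) =
      f (fun t => if (t : ℕ) < (i : ℕ) then y else if t = i then x - y else x) := by
    intro i
    have base : Fin n → E := fun t => if (t : ℕ) < (i : ℕ) then y else x
    have e1 : (fun t : Fin n => if (t : ℕ) < (i : ℕ) then y else x) =
        Function.update (fun t : Fin n => if (t : ℕ) < (i : ℕ) then y else x) i x := by
      funext t
      rcases eq_or_ne t i with rfl | ht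
      · simp
      · simp [Function.update_of_ne ht, ht]
    have e2 : (fun t : Fin n => if (t : ℕ) < (i : ℕ) + 1 then y else x) =
        Function.update (fun t : Fin n => if (t : ℕ) < (i : ℕ) then y else x) i y := by
      funext t
      rcases eq_or_ne t i with rfl | ht
      · simp
      · have : (t : ℕ) ≠ (i : ℕ) := fun h => ht (Fin.ext h)
        have : ((t : ℕ) < (i : ℕ) + 1) ↔ ((t : ℕ) < (i : ℕ)) := by omega
        simp [Function.update_of_ne ht, this]
    have e3 : (fun t : Fin n => if (t : ℕ) < (i : ℕ) then y else if t = i then x - y else x) =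
        Function.update (fun t : Fin n => if (t : ℕ) < (i : ℕ) then y else x) i (x - y) := by
      funext t
      rcases eq_or_ne t i with rfl | ht
      · simp
      · simp [Function.update_of_ne ht, ht]
    simp only [hF, e3]
    rw [f.map_update_sub, ← e1, ← e2]
  calc f (fun _ => x) - f (fun _ => y) = F 0 - F n := by rw [h0, hn]
    _ = ∑ j ∈ Finset.range n, (F j - F (j + 1)) := (Finset.sum_range_sub' F n).symm
    _ = ∑ i : Fin n, (F i - F (i + 1)) := (Fin.sum_univ_eq_sum_range _ n).symm
    _ = _ := by
        apply Finset.sum_congr rfl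
        intro i _
        exact key i


/-- One term of the divided power series. -/
def qTerm (p : FormalMultilinearSeries ℂ E ℂ) (σ : E →L[ℂ] E) (e0 : E)
    (m : ℕ) (i : Fin (m + 1)) : ContinuousMultilinearMap ℂ (fun _ : Fin m => E) ℂ :=
  ((((p (m + 1)).compContinuousLinearMap
      (fun t => if (t : ℕ) < (i : ℕ) then σ else ContinuousLinearMap.id ℂ E)).domDomCongr
      ((finSuccEquiv' i).trans (finSuccEquiv m).symm)).curryLeft e0)

theorem qTerm_apply (p : FormalMultilinearSeries ℂ E ℂ) (σ : E →L[ℂ] E) (e0 : E)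
    (m : ℕ) (i : Fin (m + 1)) (v : Fin m → E) :
    qTerm p σ e0 m i v =
      p (m + 1) (i.insertNth e0 (fun j => if (j : ℕ) < (i : ℕ) then σ (v j) else v j)) := by
  rw [qTerm, ContinuousMultilinearMap.curryLeft_apply,
    ContinuousMultilinearMap.domDomCongr_apply,
    ContinuousMultilinearMap.compContinuousLinearMap_apply]
  congr 1
  funext t
  rcases eq_or_ne t i with rfl | ht
  · simp [finSuccEquiv'_at, Fin.insertNth_apply_same]
  · obtain ⟨j, rfl⟩ := Fin.exists_succAbove_eq (Ne.symm ht).symm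
    rw [Fin.insertNth_apply_succAbove]
    simp only [Equiv.trans_apply, finSuccEquiv'_succAbove, finSuccEquiv_symm_some,
      Fin.cons_succ]
    rcases lt_or_ge (j.castSucc) i with hj | hj
    · rw [Fin.succAbove_of_castSucc_lt _ _ hj]
      have h1 : ((j.castSucc : Fin (m+1)) : ℕ) < (i : ℕ) := hj
      have h2 : ((j : ℕ) < (i : ℕ)) := by simpa using h1
      simp [h1, h2]
    · rw [Fin.succAbove_of_le_castSucc _ _ hj]
      have h1 : ¬ ((j.succ : Fin (m+1)) : ℕ) < (i : ℕ) := by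
        have := hj
        rw [Fin.le_def] at this
        simp only [Fin.coe_castSucc] at this
        simp only [Fin.val_succ]
        omega
      have h2 : ¬ ((j : ℕ) < (i : ℕ)) := by
        rw [Fin.le_def] at hj
        simp only [Fin.coe_castSucc] at hj
        omega
      rw [if_neg (by simpa using h1), if_neg h2]
      simp



theorem qTerm_norm_le (p : FormalMultilinearSeries ℂ E ℂ) (σ : E →L[ℂ] E) (e0 : E)
    (hσ : ∀ z, ‖σ z‖ ≤ ‖z‖) (he0 : ‖e0‖ ≤ 1) (m : ℕ) (i : Fin (m + 1)) :
    ‖qTerm p σ e0 m i‖ ≤ ‖p (m + 1)‖ := by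
  apply ContinuousMultilinearMap.opNorm_le_bound (norm_nonneg _)
  intro v
  rw [qTerm_apply]
  refine le_trans (ContinuousMultilinearMap.le_opNorm _ _) ?_
  rw [Fin.prod_univ_succAbove _ i]
  simp only [Fin.insertNth_apply_same, Fin.insertNth_apply_succAbove]
  have h1 : ∏ j : Fin m, ‖if (j : ℕ) < (i : ℕ) then σ (v j) else v j‖ ≤ ∏ j, ‖v j‖ := by
    apply Finset.prod_le_prod (fun j _ => norm_nonneg _)
    intro j _
    split
    · exact hσ (v j)
    · exact le_rfl
  calc ‖p (m+1)‖ * (‖e0‖ * ∏ j : Fin m, ‖if (j : ℕ) < (i : ℕ) then σ (v j) else v j‖)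
      ≤ ‖p (m+1)‖ * (1 * ∏ j, ‖v j‖) := by
        apply mul_le_mul_of_nonneg_left _ (norm_nonneg _)
        exact mul_le_mul he0 h1 (Finset.prod_nonneg fun j _ => norm_nonneg _) zero_le_one
    _ = ‖p (m+1)‖ * ∏ j, ‖v j‖ := by rw [one_mul]

/-- The divided power series. -/
def qSeries (p : FormalMultilinearSeries ℂ E ℂ) (σ : E →L[ℂ] E) (e0 : E) :
    FormalMultilinearSeries ℂ E ℂ :=
  fun m => ∑ i : Fin (m + 1), qTerm p σ e0 m i

theorem qSeries_norm_le (p : FormalMultilinearSeries ℂ E ℂ) (σ : E →L[ℂ] E) (e0 : E)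
    (hσ : ∀ z, ‖σ z‖ ≤ ‖z‖) (he0 : ‖e0‖ ≤ 1) (m : ℕ) :
    ‖qSeries p σ e0 m‖ ≤ (m + 1) * ‖p (m + 1)‖ := by
  refine le_trans (norm_sum_le _ _) ?_
  calc ∑ i : Fin (m+1), ‖qTerm p σ e0 m i‖ ≤ ∑ _i : Fin (m+1), ‖p (m+1)‖ :=
        Finset.sum_le_sum fun i _ => qTerm_norm_le p σ e0 hσ he0 m i
    _ = (m + 1) * ‖p (m + 1)‖ := by simp [mul_comm]

theorem key_identity (p : FormalMultilinearSeries ℂ E ℂ) (σ : E →L[ℂ] E)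
    (lam0 : E →L[ℂ] ℂ) (e0 : E) (hdec : ∀ z, σ z + lam0 z • e0 = z) (m : ℕ) (z : E) :
    p (m + 1) (fun _ => z) - p (m + 1) (fun _ => σ z)
      = lam0 z * qSeries p σ e0 m (fun _ => z) := by
  classical
  have hxy : z - σ z = lam0 z • e0 := by
    rw [sub_eq_iff_eq_add, add_comm]
    exact (hdec z).symm
  rw [telescope (p (m+1)) z (σ z)]
  have hterm : ∀ i : Fin (m + 1),
      (p (m+1)) (fun t => if (t : ℕ) < (i : ℕ) then σ z else if t = i then z - σ z else z)
        = lam0 z * qTerm p σ e0 m i (fun _ => z) := by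
    intro i
    set b : Fin (m+1) → E := fun t => if (t : ℕ) < (i : ℕ) then σ z else if t = i then e0 else z
      with hb
    have e1 : (fun t : Fin (m+1) => if (t : ℕ) < (i : ℕ) then σ z else if t = i then z - σ z else z)
        = Function.update b i (lam0 z • e0) := by
      funext t
      rcases eq_or_ne t i with rfl | ht
      · simp [hxy]
      · simp [hb, Function.update_of_ne ht, ht]
    have e2 : b = Function.update b i e0 := by
      funext t
      rcases eq_or_ne t i with rfl | ht
      · simp [hb]
      · simp [Function.update_of_ne ht]
    have e3 : qTerm p σ e0 m i (fun _ => z) = p (m+1) b := by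
      rw [qTerm_apply]
      congr 1
      funext t
      rcases eq_or_ne t i with rfl | ht
      · simp [hb, Fin.insertNth_apply_same]
      · obtain ⟨j, rfl⟩ := Fin.exists_succAbove_eq (Ne.symm ht).symm
        rw [Fin.insertNth_apply_succAbove]
        rcases lt_or_ge (j.castSucc) i with hj | hj
        · rw [Fin.succAbove_of_castSucc_lt _ _ hj] at ht ⊢
          have h1 : ((j.castSucc : Fin (m+1)) : ℕ) < (i : ℕ) := hj
          have h2 : ((j : ℕ) < (i : ℕ)) := by simpa using h1
          simp [hb, hj, h2]
        · rw [Fin.succAbove_of_le_castSucc _ _ hj] at ht ⊢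
          have h1 : ¬ j.succ < i := by
            rw [Fin.lt_def, Fin.val_succ]
            rw [Fin.le_def] at hj
            simp only [Fin.coe_castSucc] at hj
            omega
          have h2 : ¬ ((j : ℕ) < (i : ℕ)) := by
            rw [Fin.le_def] at hj
            simp only [Fin.coe_castSucc] at hj
            omega
          simp [hb, h1, h2, ht]
    rw [e1, ContinuousMultilinearMap.map_update_smul, e3, ← e2]
    simp
  rw [Finset.sum_congr rfl fun i _ => hterm i, ← Finset.mul_sum]
  congr 1
  rw [qSeries, ContinuousMultilinearMap.sum_apply]

theorem core (σ : E →L[ℂ] E) (lam0 : E →L[ℂ] ℂ) (e0 : E)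
    (hσ : ∀ z, ‖σ z‖ ≤ ‖z‖) (he0 : ‖e0‖ ≤ 1) (hdec : ∀ z, σ z + lam0 z • e0 = z)
    (h : E → ℂ) (hh : AnalyticAt ℂ h 0) :
    ∃ G : E → ℂ, AnalyticAt ℂ G 0 ∧ ∀ᶠ z in nhds (0 : E), h z - h (σ z) = lam0 z * G z := by
  obtain ⟨p, hpa⟩ := hh
  obtain ⟨r, hp⟩ := hpa
  have hr : 0 < r := hp.r_pos
  have hrad : r ≤ p.radius := hp.r_le
  obtain ⟨r0, hr0pos, hr0lt⟩ := ENNReal.lt_iff_exists_nnreal_btwn.mp hr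
  have hr0rad : (r0 : ENNReal) < p.radius := lt_of_lt_of_le hr0lt hrad
  obtain ⟨C, hC0, hCb⟩ := p.norm_mul_pow_le_of_lt_radius hr0rad
  have hr0pos' : (0 : ℝ) < (r0 : ℝ) := by exact_mod_cast hr0pos
  set q := qSeries p σ e0 with hq
  have hr0p : 0 < r0 := by exact_mod_cast hr0pos
  set ρ : NNReal := r0 / 2 with hρ
  have hρpos : 0 < ρ := by rw [hρ]; positivity
  have hρcoe : ((ρ : NNReal) : ℝ) = (r0 : ℝ) / 2 := by
    rw [hρ]; push_cast; ring
  have hbound : ∀ m : ℕ, ‖q m‖ * (ρ : ℝ) ^ m ≤ 2 * C / (r0 : ℝ) := by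
    intro m
    have hq1 : ‖q m‖ ≤ (m + 1) * ‖p (m + 1)‖ := qSeries_norm_le p σ e0 hσ he0 m
    have hpm : ‖p (m + 1)‖ * (r0 : ℝ) ^ (m + 1) ≤ C := hCb (m + 1)
    have hb1 : ‖p (m + 1)‖ * (r0 : ℝ) ^ m ≤ C / (r0 : ℝ) := by
      rw [le_div_iff₀ hr0pos']
      calc ‖p (m + 1)‖ * (r0 : ℝ) ^ m * (r0 : ℝ) = ‖p (m + 1)‖ * (r0 : ℝ) ^ (m + 1) := by ring
        _ ≤ C := hpm
    have hb2 : ((m : ℝ) + 1) ≤ 2 ^ m * 2 := by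
      have : m + 1 < 2 ^ (m + 1) := Nat.lt_two_pow_self
      have : (m : ℝ) + 1 ≤ (2 : ℝ) ^ (m + 1) := by exact_mod_cast this.le
      calc (m : ℝ) + 1 ≤ (2 : ℝ) ^ (m + 1) := this
        _ = 2 ^ m * 2 := by rw [pow_succ]
    have hpow : (0 : ℝ) < 2 ^ m := by positivity
    calc ‖q m‖ * (ρ : ℝ) ^ m ≤ ((m + 1) * ‖p (m + 1)‖) * (ρ : ℝ) ^ m := by
          apply mul_le_mul_of_nonneg_right hq1 (by positivity)
      _ = (((m : ℝ) + 1) / 2 ^ m) * (‖p (m + 1)‖ * (r0 : ℝ) ^ m) := by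
          rw [hρcoe, div_pow]; ring
      _ ≤ 2 * (C / (r0 : ℝ)) := by
          apply mul_le_mul
          · rw [div_le_iff₀ hpow]; linarith
          · exact hb1
          · positivity
          · norm_num
      _ = 2 * C / (r0 : ℝ) := by ring
  have hρrad : (ρ : ENNReal) ≤ q.radius :=
    q.le_radius_of_bound (2 * C / (r0 : ℝ)) hbound
  have hqradpos : 0 < q.radius := lt_of_lt_of_le (by exact_mod_cast hρpos) hρrad
  have hqball : HasFPowerSeriesOnBall q.sum q 0 q.radius :=
    q.hasFPowerSeriesOnBall hqradpos
  refine ⟨q.sum, hqball.analyticAt, ?_⟩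
  have hmin : (0 : ENNReal) < min r (ρ : ENNReal) := by
    apply lt_min hr
    exact_mod_cast hρpos
  filter_upwards [EMetric.ball_mem_nhds (0 : E) hmin] with z hz
  rw [EMetric.mem_ball, edist_zero_right] at hz
  have hznorm : (‖z‖₊ : ENNReal) < min r (ρ : ENNReal) := by
    exact hz
  have hzr : (‖z‖₊ : ENNReal) < r := lt_of_lt_of_le hznorm (min_le_left _ _)
  have hzρ : (‖z‖₊ : ENNReal) < (ρ : ENNReal) := lt_of_lt_of_le hznorm (min_le_right _ _)
  have hσz : ‖σ z‖₊ ≤ ‖z‖₊ := by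
    rw [← NNReal.coe_le_coe]
    simpa using hσ z
  have hσzr : (‖σ z‖₊ : ENNReal) < r := lt_of_le_of_lt (by exact_mod_cast hσz) hzr
  have S1 : HasSum (fun n => p n fun _ => z) (h z) := by
    have := hp.hasSum (y := z) (by rw [EMetric.mem_ball, edist_zero_right]; exact hzr)
    simpa using this
  have S2 : HasSum (fun n => p n fun _ => σ z) (h (σ z)) := by
    have := hp.hasSum (y := σ z)
      (by rw [EMetric.mem_ball, edist_zero_right]; exact hσzr)
    simpa using this
  have S3 : HasSum (fun m => q m fun _ => z) (q.sum z) := by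
    have := hqball.hasSum (y := z)
      (by rw [EMetric.mem_ball, edist_zero_right]
          exact lt_of_lt_of_le hzρ hρrad)
    simpa using this
  have Sdiff : HasSum (fun n => (p n fun _ => z) - (p n fun _ => σ z)) (h z - h (σ z)) :=
    S1.sub S2
  have S4 : HasSum (fun m => lam0 z * (q m fun _ => z)) (lam0 z * q.sum z) :=
    S3.mul_left _
  set f : ℕ → ℂ := fun n => (p n fun _ => z) - (p n fun _ => σ z) with hf
  have hf0 : f 0 = 0 := by
    rw [hf]
    simp only
    have : (fun _ : Fin 0 => z) = (fun _ : Fin 0 => σ z) := by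
      funext t; exact t.elim0
    rw [this, sub_self]
  have hfs : ∀ m, f (m + 1) = lam0 z * (q m fun _ => z) := by
    intro m
    exact key_identity p σ lam0 e0 hdec m z
  have S5 : HasSum (fun m => f (m + 1)) (lam0 z * q.sum z) := by
    rw [show (fun m => f (m + 1)) = fun m => lam0 z * (q m fun _ => z) from funext hfs]
    exact S4
  have S6 : HasSum f (lam0 z * q.sum z + ∑ i ∈ Finset.range 1, f i) :=
    (hasSum_nat_add_iff 1).mp S5
  have : h z - h (σ z) = lam0 z * q.sum z + ∑ i ∈ Finset.range 1, f i :=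
    Sdiff.unique S6
  rw [this]
  simp [hf0]

/-- The real linear form paired with a complex vector, as a continuous linear map. -/
def pairCL {k : ℕ} (v : Fin k → ℝ) : (Fin k → ℂ) →L[ℂ] ℂ :=
  ∑ i, (v i : ℂ) • ContinuousLinearMap.proj i

theorem pairCL_apply {k : ℕ} (v : Fin k → ℝ) (x : Fin k → ℂ) :
    pairCL v x = ∑ i, (v i : ℂ) * x i := by
  simp [pairCL, ContinuousLinearMap.sum_apply, ContinuousLinearMap.smul_apply]

/-- The coordinate-zero-killing projection. -/
def sigL (k : ℕ) : (Fin (k + 1) → ℂ) →L[ℂ] (Fin (k + 1) → ℂ) :=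
  ContinuousLinearMap.pi (fun i => if i = 0 then 0 else ContinuousLinearMap.proj i)

theorem sigL_apply {k : ℕ} (z : Fin (k + 1) → ℂ) (i : Fin (k + 1)) :
    sigL k z i = if i = 0 then 0 else z i := by
  rw [sigL, ContinuousLinearMap.pi_apply]
  split <;> simp

theorem sigL_norm_le {k : ℕ} (z : Fin (k + 1) → ℂ) : ‖sigL k z‖ ≤ ‖z‖ := by
  rw [pi_norm_le_iff_of_nonneg (norm_nonneg z)]
  intro i
  rw [sigL_apply]
  split
  · simp
  · exact norm_le_pi_norm z i

theorem e0_norm_le {k : ℕ} : ‖(Pi.single 0 1 : Fin (k + 1) → ℂ)‖ ≤ 1 := by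
  rw [pi_norm_le_iff_of_nonneg zero_le_one]
  intro i
  rw [Pi.single_apply]
  split <;> simp

theorem sigL_dec {k : ℕ} (z : Fin (k + 1) → ℂ) :
    sigL k z + (ContinuousLinearMap.proj (R := ℂ) (φ := fun _ : Fin (k+1) => ℂ) 0) z •
      (Pi.single 0 1 : Fin (k + 1) → ℂ) = z := by
  funext i
  simp only [Pi.add_apply, Pi.smul_apply, sigL_apply, ContinuousLinearMap.proj_apply,
    Pi.single_apply, smul_eq_mul]
  rcases eq_or_ne i 0 with rfl | hi
  · simp
  · simp [hi]

end Stmt5Aux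


open Stmt5Aux in
/-- Base case of the decomposition into polar germs: if `f = h(L₁, ℓ₁, …, ℓ_{k})/L₁` with
`h` holomorphic at zero and `{L₁, ℓ₁, …, ℓ_k}` a basis of `ℝ^{k+1}` with `Q(L₁, ℓ_j) = 0`
for all `j`, then `f = h(0, ℓ₁, …, ℓ_k)/L₁ + g` with `g` holomorphic at zero, and
`h(0, ℓ₁, …, ℓ_k)/L₁` is a polar germ. -/
theorem stmt5 (k : ℕ)
    (h : (Fin (k + 1) → ℂ) → ℂ) (hh : AnalyticAt ℂ h 0)
    (L1 : Fin (k + 1) → ℝ) (ell : Fin k → Fin (k + 1) → ℝ)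
    (hbasis : LinearIndependent ℝ (Fin.cons L1 ell : Fin (k + 1) → Fin (k + 1) → ℝ))
    (hspan : Submodule.span ℝ (Set.range (Fin.cons L1 ell : Fin (k + 1) → Fin (k + 1) → ℝ)) = ⊤)
    (horth : ∀ j, ∑ t, L1 t * ell j t = 0) :
    ∃ (g : (Fin (k + 1) → ℂ) → ℂ) (S : PolarGerm (k + 1)),
      AnalyticAt ℂ g 0 ∧
      (∀ᶠ x in nhds (0 : Fin (k + 1) → ℂ), pairC L1 x ≠ 0 →
        h (Fin.cons (pairC L1 x) fun j => pairC (ell j) x) / pairC L1 x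
          = h (Fin.cons 0 fun j => pairC (ell j) x) / pairC L1 x + g x) ∧
      (∀ x : Fin (k + 1) → ℂ, pairC L1 x ≠ 0 →
        S.eval x = h (Fin.cons 0 fun j => pairC (ell j) x) / pairC L1 x) := by
  classical
  -- the substitution continuous linear map
  set Lam : (Fin (k + 1) → ℂ) →L[ℂ] (Fin (k + 1) → ℂ) :=
    ContinuousLinearMap.pi
      (fun i : Fin (k + 1) => Fin.cases (pairCL L1) (fun j => pairCL (ell j)) i) with hLam
  have hLam_apply : ∀ x, Fin.cons (pairC L1 x) (fun j => pairC (ell j) x) = Lam x := by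
    intro x
    funext i
    induction i using Fin.cases with
    | zero => simp [hLam, ContinuousLinearMap.pi_apply, pairCL_apply, pairC]
    | succ j => simp [hLam, ContinuousLinearMap.pi_apply, pairCL_apply, pairC]
  have hLam0 : ∀ x, Lam x 0 = pairC L1 x := by
    intro x
    rw [← hLam_apply x]
    simp
  have hsigLam : ∀ x, sigL k (Lam x) = Fin.cons 0 (fun j => pairC (ell j) x) := by
    intro x
    funext i
    induction i using Fin.cases with
    | zero => simp [sigL_apply]
    | succ j =>
      rw [sigL_apply, if_neg (Fin.succ_ne_zero j), ← hLam_apply x]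
      simp
  obtain ⟨G, hG, hGev⟩ := core (sigL k)
    (ContinuousLinearMap.proj (R := ℂ) (φ := fun _ : Fin (k+1) => ℂ) 0)
    (Pi.single 0 1) sigL_norm_le e0_norm_le sigL_dec h hh
  have hLam_an : AnalyticAt ℂ (fun x => Lam x) 0 := Lam.analyticAt 0
  have hG' : AnalyticAt ℂ G (Lam 0) := by rw [map_zero]; exact hG
  refine ⟨fun x => G (Lam x), ?_, ?_, ?_, ?_⟩
  · -- the polar germ
    refine ⟨k, 1, fun w => h (Fin.cons 0 w), ?_, ell, ![L1], fun _ => 1, fun _ => le_refl 1,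
      ?_, ?_, ?_⟩
    · -- numerator analytic
      set C1 : (Fin k → ℂ) →L[ℂ] (Fin (k + 1) → ℂ) :=
        ContinuousLinearMap.pi
          (fun i : Fin (k + 1) => Fin.cases 0 (fun j => ContinuousLinearMap.proj j) i) with hC1
      have hC1_apply : ∀ w, (Fin.cons 0 w : Fin (k + 1) → ℂ) = C1 w := by
        intro w
        funext i
        induction i using Fin.cases with
        | zero => simp [hC1, ContinuousLinearMap.pi_apply]
        | succ j => simp [hC1, ContinuousLinearMap.pi_apply]
      have heq : (fun w : Fin k → ℂ => h (Fin.cons 0 w)) = h ∘ (fun w => C1 w) := by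
        funext w
        simp [hC1_apply w]
      rw [heq]
      have hh' : AnalyticAt ℂ h (C1 0) := by rw [map_zero]; exact hh
      exact hh'.comp (C1.analyticAt 0)
    · -- ell linearly independent
      have h2 := hbasis.comp Fin.succ (Fin.succ_injective _)
      have : (Fin.cons L1 ell : Fin (k + 1) → Fin (k + 1) → ℝ) ∘ Fin.succ = ell := by
        funext j
        simp
      rwa [this] at h2
    · -- ![L1] linearly independent
      apply linearIndependent_unique_iff.mpr
      have := hbasis.ne_zero 0
      simpa using this
    · -- orthogonality
      intro i j
      have hj : (![L1] : Fin 1 → Fin (k + 1) → ℝ) j = L1 := by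
        fin_cases j
        rfl
      rw [hj]
      calc ∑ t, ell i t * L1 t = ∑ t, L1 t * ell i t := by
            apply Finset.sum_congr rfl
            intro t _
            ring
        _ = 0 := horth i
  · -- g analytic
    exact hG'.comp hLam_an
  · -- the eventual identity
    have htend : Filter.Tendsto (fun x => Lam x) (nhds 0) (nhds 0) := by
      have := Lam.continuous.tendsto 0
      rwa [map_zero] at this
    filter_upwards [htend.eventually hGev] with x hx hne
    rw [hLam_apply x, ← hsigLam x]
    have hx' : h (Lam x) - h (sigL k (Lam x)) = pairC L1 x * G (Lam x) := by
      rw [← hLam0 x]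
      exact hx
    field_simp
    linear_combination hx'
  · -- evaluation of the polar germ
    intro x hx
    rw [PolarGerm.eval]
    simp [pow_one, Fin.prod_univ_one]


end
end

section
/- Any finite family of polar germs admits a choice of supporting cones whose union contains no nonzero linear subspace. Specifically, after replacing each linear form L in a denominator by ±L so that its last nonzero coordinate (in a fixed ordered basis) is positive, all supporting cones lie in the strictly convex set of pseudo-positive vectors, hence their union contains no nonzero linear subspace. -/
open Complex Filter Finset

noncomputable section

/-- A vector of `ℝ^k` is pseudo-positive (w.r.t. the standard ordered basis) if it is zero
or its last nonzero coordinate is positive. -/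
def PseudoPos {k : ℕ} (v : Fin k → ℝ) : Prop :=
  v = 0 ∨ ∃ N : Fin k, 0 < v N ∧ ∀ m : Fin k, N < m → v m = 0

lemma pp_zero {k : ℕ} : PseudoPos (0 : Fin k → ℝ) := Or.inl rfl

lemma pp_or_neg {k : ℕ} (v : Fin k → ℝ) : PseudoPos v ∨ PseudoPos (-v) := by
  classical
  by_cases h : v = 0
  · exact Or.inl (Or.inl h)
  · obtain ⟨i, hi⟩ := Function.ne_iff.mp h
    have hne : (Finset.univ.filter (fun i => v i ≠ 0)).Nonempty := ⟨i, by simpa using hi⟩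
    set M := (Finset.univ.filter (fun i => v i ≠ 0)).max' hne with hM
    have hMne : v M ≠ 0 := by
      have := Finset.max'_mem _ hne
      simpa [hM] using this
    have hbeyond : ∀ m, M < m → v m = 0 := by
      intro m hm
      by_contra hvm
      exact absurd hm (not_lt.mpr (Finset.le_max' _ m (by simp [hvm])))
    rcases lt_or_gt_of_ne hMne with hneg | hpos
    · exact Or.inr (Or.inr ⟨M, by simpa using hneg, fun m hm => by simp [hbeyond m hm]⟩)
    · exact Or.inl (Or.inr ⟨M, hpos, hbeyond⟩)

lemma pp_add {k : ℕ} {v w : Fin k → ℝ} (hv : PseudoPos v) (hw : PseudoPos w) :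
    PseudoPos (v + w) := by
  rcases hv with rfl | ⟨n, hn, hnz⟩
  · simpa using hw
  rcases hw with rfl | ⟨m, hm, hmz⟩
  · exact Or.inr ⟨n, by simpa using hn, fun t ht => by simpa using hnz t ht⟩
  rcases lt_trichotomy n m with h | rfl | h
  · exact Or.inr ⟨m, by simp [hnz m h, hm],
      fun t ht => by simp [hnz t (h.trans ht), hmz t ht]⟩
  · exact Or.inr ⟨n, by simpa using add_pos hn hm,
      fun t ht => by simp [hnz t ht, hmz t ht]⟩
  · exact Or.inr ⟨n, by simp [hmz n h, hn],
      fun t ht => by simp [hnz t ht, hmz t (h.trans ht)]⟩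

lemma pp_smul {k : ℕ} {v : Fin k → ℝ} {c : ℝ} (hc : 0 ≤ c) (hv : PseudoPos v) :
    PseudoPos (c • v) := by
  rcases hc.lt_or_eq with hc | rfl
  · rcases hv with rfl | ⟨n, hn, hnz⟩
    · simp [pp_zero]
    · exact Or.inr ⟨n, by simpa using mul_pos hc hn, fun t ht => by simp [hnz t ht]⟩
  · simpa using pp_zero

lemma pp_sum {k p : ℕ} (c : Fin p → ℝ) (L : Fin p → Fin k → ℝ) (hc : ∀ j, 0 ≤ c j)
    (hL : ∀ j, PseudoPos (L j)) : PseudoPos (∑ j, c j • L j) :=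
  Finset.sum_induction _ PseudoPos (fun _ _ ha hb => pp_add ha hb) pp_zero
    (fun j _ => pp_smul (hc j) (hL j))

lemma pp_antisymm {k : ℕ} {v : Fin k → ℝ} (h1 : PseudoPos v) (h2 : PseudoPos (-v)) :
    v = 0 := by
  rcases h1 with rfl | ⟨n, hn, hnz⟩
  · rfl
  exfalso
  rcases h2 with h | ⟨m, hm, hmz⟩
  · exact absurd (neg_eq_zero.mp h ▸ hn) (lt_irrefl 0)
  rcases lt_trichotomy n m with h | rfl | h
  · have := hnz m h
    simp [this] at hm
  · have : (0 : ℝ) < -v n := by simpa using hm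
    linarith
  · have := hmz n h
    simp at this
    simp [this] at hn

/-- Any finite family of polar germs admits a choice of signs `±1` for the linear forms in
the denominators making all of them pseudo-positive, so that all the resulting supporting
cones lie in the strictly convex set of pseudo-positive vectors; in particular the union
of the supporting cones contains no nonzero linear subspace. -/
theorem stmt11 (k N : ℕ) (S : Fin N → PolarGerm k) :
    ∃ ε : (j : Fin N) → Fin (S j).p → ℝ,
      (∀ j i, ε j i = 1 ∨ ε j i = -1) ∧
      (∀ j i, PseudoPos (ε j i • (S j).L i)) ∧
      ∀ W : Submodule ℝ (Fin k → ℝ),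
        (W : Set (Fin k → ℝ)) ⊆ (⋃ j, coneOf fun i => ε j i • (S j).L i) → W = ⊥ := by
  classical
  set ε : (j : Fin N) → Fin (S j).p → ℝ :=
    fun j i => if PseudoPos ((S j).L i) then 1 else -1 with hε_def
  have hsign : ∀ j i, ε j i = 1 ∨ ε j i = -1 := by
    intro j i
    by_cases h : PseudoPos ((S j).L i) <;> simp [hε_def, h]
  have hpp : ∀ j i, PseudoPos (ε j i • (S j).L i) := by
    intro j i
    by_cases h : PseudoPos ((S j).L i)
    · simp [hε_def, h]
    · rcases pp_or_neg ((S j).L i) with h' | h'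
      · exact absurd h' h
      · simpa [hε_def, h] using h'
  refine ⟨ε, hsign, hpp, ?_⟩
  intro W hW
  have hppW : ∀ v ∈ (W : Set (Fin k → ℝ)), PseudoPos v := by
    intro v hv
    obtain ⟨j, hj⟩ := Set.mem_iUnion.mp (hW hv)
    obtain ⟨c, hc, rfl⟩ := hj
    exact pp_sum _ _ hc (fun i => hpp j i)
  rw [eq_bot_iff]
  intro v hv
  exact (Submodule.mem_bot ℝ).mpr
    (pp_antisymm (hppW v hv) (hppW (-v) (W.neg_mem hv)))

end
end
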